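/- Let A ∈ ℝ^{m×n} with rank A = m, and let i ∈ [n] be an index contained in some basis ℬ of A such that (ℬ \ {i}) ∪ {j} is not a basis for any j ∉ ℬ. Then i is contained in every basis of A, and moreover rank A_{[[n]\{i}]} = m − 1. -/

import Mathlib

open Matrix

/-- A set `S` of column indices is a basis of `A` if it has `m` elements and the
corresponding columns are linearly independent (i.e. the column submatrix is regular). -/
def IsBasisOf {m n : ℕ} (A : Matrix (Fin m) (Fin n) ℝ) (S : Finset (Fin n)) : Prop :=
  S.card = m ∧ LinearIndependent ℝ (fun i : {i // i ∈ S} => fun r => A r i.1)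

/-- If `i` lies in a basis `ℬ` of `A` and no exchange of `i` for some `j ∉ ℬ` yields a
basis, then `i` belongs to every basis of `A` and deleting column `i` drops the rank
to `m − 1`. -/
theorem stmt_12 {m n : ℕ} (A : Matrix (Fin m) (Fin n) ℝ) (hrank : A.rank = m)
    (ℬ : Finset (Fin n)) (hℬ : IsBasisOf A ℬ) (i : Fin n) (hi : i ∈ ℬ)
    (hnoswap : ¬ ∃ j ∉ ℬ, IsBasisOf A (insert j (ℬ.erase i))) :
    (∀ S : Finset (Fin n), IsBasisOf A S → i ∈ S) ∧
      (A.submatrix id (fun j : {j : Fin n // j ≠ i} => j.1)).rank = m - 1 := by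
  classical
  obtain ⟨hcard, hli⟩ := hℬ
  set f : Fin n → (Fin m → ℝ) := fun j r => A r j with hf
  have hm1 : 1 ≤ m := by
    have := Finset.card_pos.2 ⟨i, hi⟩; omega
  -- linear independence of columns indexed by ℬ.erase i
  have hsub : (↑(ℬ.erase i) : Set (Fin n)) ⊆ (↑ℬ : Set (Fin n)) := by
    intro x hx
    exact Finset.mem_coe.2 (Finset.mem_of_mem_erase (Finset.mem_coe.1 hx))
  have hliE : LinearIndependent ℝ (fun x : (↑(ℬ.erase i) : Set (Fin n)) => f x) :=
    hli.comp (Set.inclusion hsub) (Set.inclusion_injective hsub)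
  set W : Submodule ℝ (Fin m → ℝ) :=
    Submodule.span ℝ (f '' (↑(ℬ.erase i) : Set (Fin n))) with hWdef
  have hrange : Set.range (fun x : (↑(ℬ.erase i) : Set (Fin n)) => f x)
      = f '' (↑(ℬ.erase i) : Set (Fin n)) := by
    rw [show (fun x : (↑(ℬ.erase i) : Set (Fin n)) => f x) = f ∘ Subtype.val from rfl,
      Set.range_comp, Subtype.range_val]
  have hWrank : Module.finrank ℝ W = m - 1 := by
    have := finrank_span_eq_card hliE
    rw [hrange] at this
    rw [hWdef, this]
    simp only [Finset.coe_sort_coe, Fintype.card_coe]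
    rw [Finset.card_erase_of_mem hi, hcard]
  -- every column other than i lies in W
  have hW : ∀ j : Fin n, j ≠ i → f j ∈ W := by
    intro j hj
    by_cases hjB : j ∈ ℬ
    · exact Submodule.subset_span ⟨j, Finset.mem_coe.2 (Finset.mem_erase.2 ⟨hj, hjB⟩), rfl⟩
    · by_contra hjW
      apply hnoswap
      refine ⟨j, hjB, ?_, ?_⟩
      · have hjE : j ∉ ℬ.erase i := fun h => hjB (Finset.mem_of_mem_erase h)
        rw [Finset.card_insert_of_notMem hjE, Finset.card_erase_of_mem hi, hcard]
        omega
      · have hjE : j ∉ (↑(ℬ.erase i) : Set (Fin n)) := by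
          intro h
          exact hjB (Finset.mem_of_mem_erase (Finset.mem_coe.1 h))
        have h1 : LinearIndependent ℝ
            (fun x : (insert j (↑(ℬ.erase i) : Set (Fin n)) : Set (Fin n)) => f x) :=
          (linearIndepOn_insert hjE).2 ⟨hliE, hjW⟩
        let e : {x // x ∈ insert j (ℬ.erase i)} ≃
            (insert j (↑(ℬ.erase i) : Set (Fin n)) : Set (Fin n)) :=
          Equiv.subtypeEquivRight (by intro x; simp [and_comm])
        have h2 := h1.comp e e.injective
        have heq : ((fun x : (insert j (↑(ℬ.erase i) : Set (Fin n)) : Set (Fin n)) => f ↑x)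
            ∘ ⇑e) = fun x : {x // x ∈ insert j (ℬ.erase i)} => fun r => A r x.1 := by
          funext x
          simp only [Function.comp_apply]
          rfl
        rwa [heq] at h2
  constructor
  · -- every basis contains i
    intro S hS
    by_contra hiS
    obtain ⟨hScard, hSli⟩ := hS
    have hmem : ∀ x : {x // x ∈ S}, f x.1 ∈ W := fun x =>
      hW x.1 (fun h => hiS (h ▸ x.2))
    have hliW : LinearIndependent ℝ (fun x : {x // x ∈ S} => (⟨f x.1, hmem x⟩ : W)) := by
      apply LinearIndependent.of_comp W.subtype
      exact hSli
    have hle : Fintype.card {x // x ∈ S} ≤ Module.finrank ℝ W :=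
      hliW.fintype_card_le_finrank
    rw [hWrank, Fintype.card_coe, hScard] at hle
    omega
  · -- rank of the matrix with column i removed
    rw [Matrix.rank_eq_finrank_span_cols]
    have hspan : Submodule.span ℝ
        (Set.range (A.submatrix id (fun j : {j : Fin n // j ≠ i} => j.1))ᵀ) = W := by
      apply le_antisymm
      · rw [Submodule.span_le]
        rintro _ ⟨j, rfl⟩
        exact hW j.1 j.2
      · rw [hWdef, Submodule.span_le]
        rintro _ ⟨x, hx, rfl⟩
        have hxi : x ≠ i := (Finset.mem_erase.1 (Finset.mem_coe.1 hx)).1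
        exact Submodule.subset_span ⟨⟨x, hxi⟩, rfl⟩
    rw [← hWrank, ← hspan]; rfl
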